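/- Let G be a topological group which is compact, and let (C_n)_{n∈ℕ} be closed symmetric subsets containing the identity with C_n² ⊆ C_{n+1}, such that H = ⋃_n C_n is a closed subgroup of G. Then H = C_n for some n. -/

import Mathlib

open Pointwise

private lemma C_mono {G : Type*} [Group G] (C : ℕ → Set G)
    (hone : ∀ n, (1 : G) ∈ C n) (hsq : ∀ n, C n * C n ⊆ C (n + 1)) :
    Monotone C := by
  apply monotone_nat_of_le_succ
  intro n x hx
  have : x * 1 ∈ C (n + 1) := hsq n (Set.mul_mem_mul hx (hone n))
  simpa using this

/-- In a compact topological group, if `(C n)` are closed symmetric sets containing the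
identity with `C n · C n ⊆ C (n+1)`, and `H = ⋃ n, C n` is a closed subgroup, then
`H = C n` for some `n`. -/
theorem closed_union_chain_stabilizes {G : Type*} [Group G] [TopologicalSpace G]
    [IsTopologicalGroup G] [CompactSpace G]
    (C : ℕ → Set G)
    (hcl : ∀ n, IsClosed (C n))
    (hsym : ∀ n, (C n)⁻¹ = C n)
    (hone : ∀ n, (1 : G) ∈ C n)
    (hsq : ∀ n, C n * C n ⊆ C (n + 1))
    (H : Subgroup G) (hH : (H : Set G) = ⋃ n, C n)
    (hHcl : IsClosed (H : Set G)) :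
    ∃ n, (H : Set G) = C n := by
  have hmono := C_mono C hone hsq
  have hCH : ∀ n, C n ⊆ (H : Set G) := by
    intro n
    rw [hH]; exact Set.subset_iUnion C n
  -- The subtype H is a compact Baire space
  have hKcomp : IsCompact (H : Set G) := hHcl.isCompact
  haveI : CompactSpace (H : Set G) := isCompact_iff_compactSpace.mp hKcomp
  haveI : Nonempty ↥(H : Set G) := ⟨⟨1, H.one_mem⟩⟩
  -- Baire: some C n has nonempty interior in H
  have hbaire : ∃ n, (interior ((Subtype.val : ↥(H : Set G) → G) ⁻¹' C n)).Nonempty := by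
    apply nonempty_interior_of_iUnion_of_closed
    · exact fun n => (hcl n).preimage continuous_subtype_val
    · ext x
      simp only [Set.mem_iUnion, Set.mem_preimage, Set.mem_univ, iff_true]
      have hx2 : (x : G) ∈ ⋃ n, C n := by rw [← hH]; exact x.2
      exact Set.mem_iUnion.mp hx2
  obtain ⟨n, x0, hx0⟩ := hbaire
  -- translate to an open set U in G with x0 ∈ U and U ∩ H ⊆ C n
  rw [mem_interior_iff_mem_nhds, nhds_subtype_eq_comap, Filter.mem_comap] at hx0
  obtain ⟨t, ht, hts⟩ := hx0
  obtain ⟨U, hUt, hUopen, hxU⟩ := mem_nhds_iff.mp ht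
  have hUH : U ∩ (H : Set G) ⊆ C n := by
    rintro y ⟨hyU, hyH⟩
    exact hts (a := ⟨y, hyH⟩) (hUt hyU)
  set x : G := (x0 : G)
  have hxH : x ∈ (H : Set G) := x0.2
  have hxC : x ∈ C n := hUH ⟨hxU, hxH⟩
  -- V is an open neighborhood of 1
  set V : Set G := x⁻¹ • U with hV
  have hVopen : IsOpen V := hUopen.smul _
  have h1V : (1 : G) ∈ V := ⟨x, hxU, by simp⟩
  -- cover H by translates h • V, h ∈ H
  have hcover : (H : Set G) ⊆ ⋃ h : ↥(H : Set G), (h : G) • V := by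
    intro g hg
    exact Set.mem_iUnion.mpr ⟨⟨g, hg⟩, ⟨1, h1V, by simp⟩⟩
  obtain ⟨s, hs⟩ := hKcomp.elim_finite_subcover _ (fun h => hVopen.smul _) hcover
  -- each element of s lies in some C m; take the max
  have hmem : ∀ h : ↥(H : Set G), ∃ m, (h : G) ∈ C m := by
    intro h
    have hh2 : (h : G) ∈ ⋃ n, C n := by rw [← hH]; exact h.2
    exact Set.mem_iUnion.mp hh2
  choose m hm using hmem
  set M : ℕ := max n (s.sup m) with hM
  refine ⟨M + 2, Set.Subset.antisymm ?_ (hCH _)⟩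
  intro g hg
  obtain ⟨h, hhs, hgh⟩ := by simpa only [Set.mem_iUnion] using hs hg
  -- g ∈ h • (x⁻¹ • U), so x * (h⁻¹ * g) ∈ U
  obtain ⟨u, huU, hgu⟩ : ∃ u ∈ U, g = (h : G) * (x⁻¹ * u) := by
    obtain ⟨v, hvV, hgv⟩ := hgh
    obtain ⟨u, huU, hvu⟩ := hvV
    exact ⟨u, huU, by rw [← hgv, ← hvu]; simp [smul_smul, mul_assoc]⟩
  have huH : u ∈ (H : Set G) := by
    have : ((h : G)⁻¹ : G) * g ∈ H := H.mul_mem (H.inv_mem h.2) hg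
    have hx1 : x⁻¹ * u = (h : G)⁻¹ * g := by
      rw [hgu]; group
    have : x⁻¹ * u ∈ H := hx1 ▸ this
    have := H.mul_mem hxH this
    simpa [← mul_assoc] using this
  have huC : u ∈ C n := hUH ⟨huU, huH⟩
  -- assemble: g = h * x⁻¹ * u ∈ C M * C M * C M ⊆ C (M+2)
  have hhM : (h : G) ∈ C M := hmono (le_max_of_le_right (Finset.le_sup hhs)) (hm h)
  have hxM : x⁻¹ ∈ C M := hmono (le_max_left _ _) (by rw [← hsym n]; exact Set.inv_mem_inv.mpr hxC)
  have huM : u ∈ C M := hmono (le_max_left _ _) huC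
  have huM1 : u ∈ C (M + 1) := hmono (Nat.le_succ M) huM
  have : (h : G) * x⁻¹ * u ∈ C (M + 1 + 1) :=
    hsq _ (Set.mul_mem_mul (hsq _ (Set.mul_mem_mul hhM hxM)) huM1)
  rw [hgu, ← mul_assoc]
  exact this
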